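/- Khintchine's inequality lower half: for every 0 < r < ∞ there is a constant C_r such that for every finite family of reals (x_i)_{i∈A}, (Ave_{ε_i=±1} |∑_{i∈A} ε_i x_i|^r)^{1/r} ≤ C_r (∑_{i∈A} x_i^2)^{1/2}. -/

import Mathlib

open Real Finset

/-- pointwise bound `|t|^r ≤ r^r e^{-r} (e^t + e^{-t})`. -/
lemma khin_pointwise (r : ℝ) (hr : 0 < r) (t : ℝ) :
    |t| ^ r ≤ r ^ r * Real.exp (-r) * (Real.exp t + Real.exp (-t)) := by
  have hKey : |t| ^ r ≤ r ^ r * Real.exp (-r) * Real.exp |t| := by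
    rcases eq_or_lt_of_le (abs_nonneg t) with h0 | h0
    · rw [← h0, Real.zero_rpow hr.ne']
      positivity
    · rw [Real.rpow_def_of_pos h0, Real.rpow_def_of_pos hr, ← Real.exp_add, ← Real.exp_add,
        Real.exp_le_exp]
      have hlog : Real.log (|t| / r) ≤ |t| / r - 1 :=
        Real.log_le_sub_one_of_pos (div_pos h0 hr)
      have := mul_le_mul_of_nonneg_left hlog hr.le
      rw [Real.log_div h0.ne' hr.ne'] at this
      have h2 : r * (|t| / r - 1) = |t| - r := by field_simp
      nlinarith [this]
  refine hKey.trans ?_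
  have hpos : (0:ℝ) < r ^ r * Real.exp (-r) := by positivity
  refine mul_le_mul_of_nonneg_left ?_ hpos.le
  rcases abs_cases t with ⟨h, _⟩ | ⟨h, _⟩ <;> rw [h] <;>
    nlinarith [Real.exp_pos t, Real.exp_pos (-t)]

/-- MGF bound: `∑_ε e^{∑ ε_i y_i} ≤ 2^n e^{(∑ y_i²)/2}`. -/
lemma khin_mgf (n : ℕ) (y : Fin n → ℝ) :
    ∑ ε : Fin n → Bool, Real.exp (∑ i, (if ε i then (1:ℝ) else -1) * y i) ≤
      2 ^ n * Real.exp ((∑ i, y i ^ 2) / 2) := by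
  have h1 : ∀ ε : Fin n → Bool,
      Real.exp (∑ i, (if ε i then (1:ℝ) else -1) * y i)
        = ∏ i, Real.exp ((if ε i then (1:ℝ) else -1) * y i) := fun ε => Real.exp_sum _ _
  simp only [h1]
  rw [← Fintype.prod_sum (fun (i : Fin n) (b : Bool) => Real.exp ((if b then (1:ℝ) else -1) * y i))]
  calc ∏ i, ∑ b : Bool, Real.exp ((if b then (1:ℝ) else -1) * y i)
      ≤ ∏ i : Fin n, 2 * Real.exp (y i ^ 2 / 2) := by
        refine Finset.prod_le_prod (fun i _ => ?_) (fun i _ => ?_)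
        · rw [Fintype.sum_bool]; positivity
        · rw [Fintype.sum_bool]
          simp only [if_true, Bool.false_eq_true, if_false, one_mul, neg_one_mul]
          have := Real.cosh_le_exp_half_sq (y i)
          rw [Real.cosh_eq] at this
          nlinarith [Real.exp_pos (y i), Real.exp_pos (-(y i))]
    _ = 2 ^ n * Real.exp ((∑ i, y i ^ 2) / 2) := by
        rw [Finset.prod_mul_distrib, Finset.prod_const, ← Real.exp_sum, Finset.card_univ,
          Fintype.card_fin, Finset.sum_div]

/-- lower half of Khintchine's inequality for every exponent `0 < r < ∞`. -/
theorem stmt_8 (r : ℝ) (hr : 0 < r) : ∃ C : ℝ, 0 < C ∧ ∀ (n : ℕ) (x : Fin n → ℝ),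
    ((∑ ε : Fin n → Bool, |∑ i, (if ε i then (1 : ℝ) else -1) * x i| ^ r) / 2 ^ n)
        ^ (1 / r) ≤
      C * (∑ i, x i ^ 2) ^ ((1 : ℝ) / 2) := by
  set M : ℝ := 2 * (r ^ r * Real.exp (-r)) * Real.exp ((1:ℝ)/2) with hM
  have hMpos : 0 < M := by positivity
  refine ⟨M ^ (1/r), Real.rpow_pos_of_pos hMpos _, fun n x => ?_⟩
  set Q : ℝ := ∑ i, x i ^ 2 with hQ
  have hQnn : 0 ≤ Q := Finset.sum_nonneg fun i _ => sq_nonneg _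
  rcases eq_or_lt_of_le hQnn with hQ0 | hQ0
  · -- all x i = 0
    have hx : ∀ i, x i = 0 := by
      intro i
      have := (Finset.sum_eq_zero_iff_of_nonneg (fun i _ => sq_nonneg (x i))).1 hQ0.symm i
        (Finset.mem_univ i)
      exact pow_eq_zero_iff two_ne_zero |>.1 this
    have hS : ∀ ε : Fin n → Bool, (∑ i, (if ε i then (1:ℝ) else -1) * x i) = 0 := by
      intro ε; apply Finset.sum_eq_zero; intro i _; rw [hx i, mul_zero]
    simp only [hS, abs_zero, Real.zero_rpow hr.ne', Finset.sum_const, smul_zero, zero_div]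
    rw [Real.zero_rpow (by positivity : (1:ℝ)/r ≠ 0), ← hQ0,
      Real.zero_rpow (by norm_num : (1:ℝ)/2 ≠ 0), mul_zero]
  · -- σ > 0
    set σ : ℝ := Q ^ ((1:ℝ)/2) with hσ
    have hσpos : 0 < σ := Real.rpow_pos_of_pos hQ0 _
    have hσsq : σ ^ 2 = Q := by
      rw [hσ, ← Real.rpow_natCast (Q ^ ((1:ℝ)/2)) 2, ← Real.rpow_mul hQnn]
      norm_num
    set y : Fin n → ℝ := fun i => x i / σ with hy
    have hy2 : ∑ i, y i ^ 2 = 1 := by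
      simp only [hy, div_pow]
      rw [← Finset.sum_div, ← hQ, ← hσsq, div_self (by positivity)]
    -- relate the sums
    have hST : ∀ ε : Fin n → Bool, (∑ i, (if ε i then (1:ℝ) else -1) * x i)
        = σ * ∑ i, (if ε i then (1:ℝ) else -1) * y i := by
      intro ε
      rw [Finset.mul_sum]
      refine Finset.sum_congr rfl fun i _ => ?_
      rw [hy]; field_simp
    have hbound : (∑ ε : Fin n → Bool, |∑ i, (if ε i then (1:ℝ) else -1) * x i| ^ r) / 2 ^ n
        ≤ M * σ ^ r := by
      have hterm : ∀ ε : Fin n → Bool,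
          |∑ i, (if ε i then (1:ℝ) else -1) * x i| ^ r
            ≤ σ ^ r * (r ^ r * Real.exp (-r) *
              (Real.exp (∑ i, (if ε i then (1:ℝ) else -1) * y i)
                + Real.exp (∑ i, (if ε i then (1:ℝ) else -1) * (-y i)))) := by
        intro ε
        rw [hST ε, abs_mul, abs_of_pos hσpos,
          Real.mul_rpow hσpos.le (abs_nonneg _)]
        have hneg : (∑ i, (if ε i then (1:ℝ) else -1) * (-y i))
            = -∑ i, (if ε i then (1:ℝ) else -1) * y i := by
          rw [← Finset.sum_neg_distrib]; exact Finset.sum_congr rfl fun i _ => by ring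
        rw [hneg]
        exact mul_le_mul_of_nonneg_left
          (khin_pointwise r hr _) (Real.rpow_nonneg hσpos.le r)
      have hsum : (∑ ε : Fin n → Bool, |∑ i, (if ε i then (1:ℝ) else -1) * x i| ^ r)
          ≤ σ ^ r * (r ^ r * Real.exp (-r) * (2 ^ n * Real.exp ((1:ℝ)/2)
              + 2 ^ n * Real.exp ((1:ℝ)/2))) := by
        calc (∑ ε : Fin n → Bool, |∑ i, (if ε i then (1:ℝ) else -1) * x i| ^ r)
            ≤ ∑ ε : Fin n → Bool, σ ^ r * (r ^ r * Real.exp (-r) *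
              (Real.exp (∑ i, (if ε i then (1:ℝ) else -1) * y i)
                + Real.exp (∑ i, (if ε i then (1:ℝ) else -1) * (-y i)))) :=
              Finset.sum_le_sum fun ε _ => hterm ε
          _ ≤ _ := by
              rw [← Finset.mul_sum, ← Finset.mul_sum]
              refine mul_le_mul_of_nonneg_left (mul_le_mul_of_nonneg_left ?_ (by positivity))
                (Real.rpow_nonneg hσpos.le r)
              rw [Finset.sum_add_distrib]
              have h1 := khin_mgf n y
              have h2 := khin_mgf n (fun i => -y i)
              rw [show ∑ i, (-y i) ^ 2 = ∑ i, y i ^ 2 from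
                Finset.sum_congr rfl fun i _ => by ring] at h2
              rw [hy2] at h1 h2
              exact add_le_add h1 h2
      rw [div_le_iff₀ (by positivity : (0:ℝ) < 2 ^ n)]
      calc (∑ ε : Fin n → Bool, |∑ i, (if ε i then (1:ℝ) else -1) * x i| ^ r)
          ≤ _ := hsum
        _ = M * σ ^ r * 2 ^ n := by rw [hM]; ring
    have hLHSnn : 0 ≤ (∑ ε : Fin n → Bool, |∑ i, (if ε i then (1:ℝ) else -1) * x i| ^ r)
        / 2 ^ n := by positivity
    calc ((∑ ε : Fin n → Bool, |∑ i, (if ε i then (1:ℝ) else -1) * x i| ^ r) / 2 ^ n) ^ (1/r)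
        ≤ (M * σ ^ r) ^ (1/r) := Real.rpow_le_rpow hLHSnn hbound (by positivity)
      _ = M ^ (1/r) * σ := by
          rw [Real.mul_rpow hMpos.le (Real.rpow_nonneg hσpos.le r),
            ← Real.rpow_mul hσpos.le, mul_one_div, div_self hr.ne', Real.rpow_one]
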